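/- In the (4, 3, 3) intersection construction, for every j with 3 ≤ j ≤ 4: Σ_{ℓ=2}^{j−1} ρ(A^(3)_{j,ℓ}) ≤ Σ_{ℓ=1}^{j−1} ρ(A^(4)_{j,ℓ}) − ρ(A^(3)_{j,j}). -/

import Mathlib

open scoped BigOperators

open Module Submodule Matrix

section aux
variable {F : Type*} [Field F] {a : ℕ}

lemma rank_block' {ι : Type*} [Fintype ι] (M : (Fin 4 × Fin a) → ι → F) (j : Fin 4) :
    (Matrix.of fun (x : Fin a) (y : ι) => M (j, x) y).rank
      = finrank F ((span F (Set.range fun y : ι => fun r => M r y)).map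
          (LinearMap.funLeft F F (fun x : Fin a => (j, x)))) := by
  have hs : Set.range (Matrix.of fun (x : Fin a) (y : ι) => M (j, x) y)ᵀ
      = (LinearMap.funLeft F F (fun x : Fin a => (j, x))) ''
          (Set.range fun y : ι => fun r => M r y) := by
    ext v
    constructor
    · rintro ⟨y, rfl⟩
      exact ⟨fun r => M r y, ⟨y, rfl⟩, rfl⟩
    · rintro ⟨w, ⟨y, rfl⟩, rfl⟩
      exact ⟨y, rfl⟩
  rw [Matrix.rank_eq_finrank_span_cols,
    show Set.range (Matrix.of fun (x : Fin a) (y : ι) => M (j, x) y).col = _ from hs,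
    ← Submodule.span_image]

lemma key' (π : ((Fin 4 × Fin a) → F) →ₗ[F] (Fin a → F))
    (A B : Submodule F ((Fin 4 × Fin a) → F)) :
    finrank F ((A ⊓ B).map π) + finrank F ((A ⊔ B).map π)
      ≤ finrank F (A.map π) + finrank F (B.map π) := by
  rw [Submodule.map_sup, ← Submodule.finrank_sup_add_finrank_inf_eq (A.map π) (B.map π)]
  have h1 : (A ⊓ B).map π ≤ A.map π ⊓ B.map π :=
    le_inf (Submodule.map_mono inf_le_left) (Submodule.map_mono inf_le_right)
  have := Submodule.finrank_mono h1
  omega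

end aux

/-- Lemma 3b for `(4,3,3)`: in the intersection construction, for every
thick-column index `j` (0-indexed `2 ≤ j ≤ 3`),
`∑_{ℓ} ρ(A⁽³⁾_{j,ℓ}) ≤ ∑_{ℓ} ρ(A⁽⁴⁾_{j,ℓ}) - ρ(A⁽³⁾_{j,j})` where on the left `ℓ` ranges
over `1 ≤ ℓ < j` (0-indexed) and on the right over `0 ≤ ℓ < j` (0-indexed). -/
theorem stmt9 (F : Type*) [Field F] (a : ℕ) (ha : 1 ≤ a)
    (H4 : Matrix (Fin 4 × Fin a) (Fin 4 × Fin a) F)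
    -- diagonal blocks of H⁽⁴⁾ are the identity
    (hdiag : ∀ i : Fin 4, (Matrix.of fun x y : Fin a => H4 (i, x) (i, y))
        = (1 : Matrix (Fin a) (Fin a) F))
    -- `H3 j` is the `j`-th thick column of `H⁽³⁾`, with `c j` columns
    (c : Fin 4 → ℕ)
    (H3 : ∀ j : Fin 4, Matrix (Fin 4 × Fin a) (Fin (c j)) F)
    -- the columns of `H3 j` form a basis of `S(H⁽⁴⁾_j) ∩ S(H⁽⁴⁾|_{[j-1]})`
    (hbasis : ∀ j : Fin 4, 1 ≤ (j : ℕ) →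
      LinearIndependent F (fun l : Fin (c j) => (fun r => H3 j r l : (Fin 4 × Fin a) → F)) ∧
      Submodule.span F (Set.range (fun l : Fin (c j) => (fun r => H3 j r l : (Fin 4 × Fin a) → F)))
        = Submodule.span F
            (Set.range (fun y : Fin a => (fun r => H4 r (j, y) : (Fin 4 × Fin a) → F)))
          ⊓ Submodule.span F
            (Set.range (fun p : {p : Fin 4 × Fin a // (p.1 : ℕ) < (j : ℕ)} =>
              (fun r => H4 r p.val : (Fin 4 × Fin a) → F)))) :
    ∀ j : Fin 4, 2 ≤ (j : ℕ) →
      (∑ l ∈ Finset.univ.filter (fun l : Fin 4 => 1 ≤ (l : ℕ) ∧ (l : ℕ) < (j : ℕ)),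
          ((Matrix.of fun (x : Fin a) (y : Fin (c l)) => H3 l (j, x) y).rank : ℤ))
        ≤ (∑ l ∈ Finset.univ.filter (fun l : Fin 4 => (l : ℕ) < (j : ℕ)),
            ((Matrix.of fun x y : Fin a => H4 (j, x) (l, y)).rank : ℤ))
          - ((Matrix.of fun (x : Fin a) (l : Fin (c j)) => H3 j (j, x) l).rank : ℤ) := by
  intro j hj
  classical
  set πj : ((Fin 4 × Fin a) → F) →ₗ[F] (Fin a → F) :=
    LinearMap.funLeft F F (fun x : Fin a => (j, x)) with hπj
  set V : Fin 4 → Submodule F ((Fin 4 × Fin a) → F) :=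
    fun i => Submodule.span F (Set.range fun y : Fin a => fun r => H4 r (i, y)) with hVdef
  set U : Fin 4 → Submodule F ((Fin 4 × Fin a) → F) :=
    fun i => Submodule.span F (Set.range fun p : {p : Fin 4 × Fin a // (p.1 : ℕ) < (i : ℕ)} =>
      fun r => H4 r p.val) with hUdef
  set f : Submodule F ((Fin 4 × Fin a) → F) → ℕ := fun W => finrank F (W.map πj) with hfdef
  have hr3 : ∀ l : Fin 4,
      (Matrix.of fun (x : Fin a) (y : Fin (c l)) => H3 l (j, x) y).rank
        = f (Submodule.span F (Set.range fun y : Fin (c l) => fun r => H3 l r y)) :=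
    fun l => rank_block' (fun r y => H3 l r y) j
  have hr4 : ∀ l : Fin 4,
      (Matrix.of fun x y : Fin a => H4 (j, x) (l, y)).rank = f (V l) :=
    fun l => rank_block' (fun r y => H4 r (l, y)) j
  have hspan : ∀ l : Fin 4, 1 ≤ (l : ℕ) →
      Submodule.span F (Set.range fun y : Fin (c l) => fun r => H3 l r y) = V l ⊓ U l :=
    fun l hl => (hbasis l hl).2
  have hUle : ∀ (i : Fin 4) (W : Submodule F ((Fin 4 × Fin a) → F)),
      (∀ m : Fin 4, (m : ℕ) < (i : ℕ) → V m ≤ W) → U i ≤ W := by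
    intro i W hW
    rw [hUdef]
    refine Submodule.span_le.2 ?_
    rintro v ⟨⟨p, hp⟩, rfl⟩
    exact hW p.1 hp (Submodule.subset_span ⟨p.2, rfl⟩)
  have hkey : ∀ A B, f (A ⊓ B) + f (A ⊔ B) ≤ f A + f B := key' πj
  have hmono : ∀ {A B : Submodule F ((Fin 4 × Fin a) → F)}, A ≤ B → f A ≤ f B :=
    fun h => Submodule.finrank_mono (Submodule.map_mono h)
  have hm0 : ∀ m : Fin 4, (m : ℕ) < 1 → m = 0 := by decide
  have hm01 : ∀ m : Fin 4, (m : ℕ) < 2 → m = 0 ∨ m = 1 := by decide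
  have hm012 : ∀ m : Fin 4, (m : ℕ) < 3 → m = 0 ∨ m = 1 ∨ m = 2 := by decide
  have hcase : (j : ℕ) = 2 ∨ (j : ℕ) = 3 := by omega
  rcases hcase with hc | hc
  · simp only [hc]
    rw [show (Finset.univ.filter (fun l : Fin 4 => 1 ≤ (l : ℕ) ∧ (l : ℕ) < 2)) = {1} from by
      decide]
    rw [show (Finset.univ.filter (fun l : Fin 4 => (l : ℕ) < 2)) = {0, 1} from by decide]
    rw [Finset.sum_singleton, Finset.sum_insert (by decide), Finset.sum_singleton]
    rw [hr3 1, hr3 j, hr4 0, hr4 1, hspan 1 (by decide), hspan j (by omega)]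
    have hU1 : U 1 ≤ V 0 := by
      refine hUle 1 (V 0) ?_
      intro m hm
      rw [hm0 m hm]
    have hUj : U j ≤ V 0 ⊔ V 1 := by
      refine hUle j _ ?_
      intro m hm
      rcases hm01 m (by omega) with rfl | rfl
      · exact le_sup_left
      · exact le_sup_right
    have e1 : f (V 1 ⊓ V 0) + f (V 1 ⊔ V 0) ≤ f (V 1) + f (V 0) := hkey _ _
    rw [sup_comm (V 1) (V 0)] at e1
    have e2 : f (V 1 ⊓ U 1) ≤ f (V 1 ⊓ V 0) := hmono (inf_le_inf_left _ hU1)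
    have e3 : f (V j ⊓ U j) ≤ f (V 0 ⊔ V 1) := hmono (le_trans inf_le_right hUj)
    omega
  · simp only [hc]
    rw [show (Finset.univ.filter (fun l : Fin 4 => 1 ≤ (l : ℕ) ∧ (l : ℕ) < 3)) = {1, 2} from by
      decide]
    rw [show (Finset.univ.filter (fun l : Fin 4 => (l : ℕ) < 3)) = {0, 1, 2} from by decide]
    rw [Finset.sum_insert (by decide), Finset.sum_singleton,
      Finset.sum_insert (by decide), Finset.sum_insert (by decide), Finset.sum_singleton]
    rw [hr3 1, hr3 2, hr3 j, hr4 0, hr4 1, hr4 2,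
      hspan 1 (by decide), hspan 2 (by decide), hspan j (by omega)]
    have hU1 : U 1 ≤ V 0 := by
      refine hUle 1 (V 0) ?_
      intro m hm
      rw [hm0 m hm]
    have hU2 : U 2 ≤ V 0 ⊔ V 1 := by
      refine hUle 2 _ ?_
      intro m hm
      rcases hm01 m hm with rfl | rfl
      · exact le_sup_left
      · exact le_sup_right
    have hUj : U j ≤ V 2 ⊔ (V 0 ⊔ V 1) := by
      refine hUle j _ ?_
      intro m hm
      rcases hm012 m (by omega) with rfl | rfl | rfl
      · exact le_sup_of_le_right le_sup_left
      · exact le_sup_of_le_right le_sup_right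
      · exact le_sup_left
    have e1 : f (V 1 ⊓ V 0) + f (V 1 ⊔ V 0) ≤ f (V 1) + f (V 0) := hkey _ _
    rw [sup_comm (V 1) (V 0)] at e1
    have e2 : f (V 2 ⊓ (V 0 ⊔ V 1)) + f (V 2 ⊔ (V 0 ⊔ V 1)) ≤ f (V 2) + f (V 0 ⊔ V 1) :=
      hkey _ _
    have m1 : f (V 1 ⊓ U 1) ≤ f (V 1 ⊓ V 0) := hmono (inf_le_inf_left _ hU1)
    have m2 : f (V 2 ⊓ U 2) ≤ f (V 2 ⊓ (V 0 ⊔ V 1)) := hmono (inf_le_inf_left _ hU2)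
    have m3 : f (V j ⊓ U j) ≤ f (V 2 ⊔ (V 0 ⊔ V 1)) := hmono (le_trans inf_le_right hUj)
    omega
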